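/- Let φ : ℂ → ℂ be holomorphic on the open unit disk 𝔻 = {w : ℂ | ‖w‖ < 1}, mapping 𝔻 into the closed unit disk (‖φ(w)‖ ≤ 1 for all w ∈ 𝔻), and suppose ‖φ(0)‖ < 1. Then for every w ∈ 𝔻, 1 − ‖w‖ ≤ C · (1 − ‖φ(w)‖), where C = 2·(1 + ‖φ(0)‖)/(1 − ‖φ(0)‖). -/

import Mathlib

open Metric Set

private lemma disk_ball_eq : {w : ℂ | ‖w‖ < 1} = Metric.ball (0:ℂ) 1 := by
  ext w; simp [Metric.mem_ball, dist_zero_right]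

/-- key algebraic identity -/
private lemma norm_sq_identity (a b : ℂ) :
    ‖1 - (starRingEnd ℂ) a * b‖ ^ 2 - ‖b - a‖ ^ 2
      = (1 - ‖a‖ ^ 2) * (1 - ‖b‖ ^ 2) := by
  have h : ∀ z : ℂ, (‖z‖ : ℂ) ^ 2 = z * (starRingEnd ℂ) z := by
    intro z
    rw [Complex.mul_conj']
  have := h (1 - (starRingEnd ℂ) a * b)
  have h2 := h (b - a)
  have h3 := h a
  have h4 := h b
  have key : ((‖1 - (starRingEnd ℂ) a * b‖ : ℂ) ^ 2 - (‖b - a‖ : ℂ) ^ 2)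
      = ((1 : ℂ) - (‖a‖ : ℂ) ^ 2) * ((1 : ℂ) - (‖b‖ : ℂ) ^ 2) := by
    rw [this, h2, h3, h4]
    simp only [map_sub, map_mul, map_one, Complex.conj_conj]
    ring
  exact_mod_cast key

/-- First inequality of the Lemma on holomorphic maps of the disk:
`1 - ‖w‖ ≤ C (1 - ‖φ(w)‖)` with `C = 2 (1 + ‖φ 0‖)/(1 - ‖φ 0‖)`. -/
theorem disk_map_boundary_distance_bound
    (φ : ℂ → ℂ)
    (hφ : DifferentiableOn ℂ φ {w : ℂ | ‖w‖ < 1})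
    (hmap : ∀ w ∈ {w : ℂ | ‖w‖ < 1}, ‖φ w‖ ≤ 1)
    (h0 : ‖φ 0‖ < 1) :
    ∀ w ∈ {w : ℂ | ‖w‖ < 1},
      1 - ‖w‖ ≤ (2 * (1 + ‖φ 0‖) / (1 - ‖φ 0‖)) * (1 - ‖φ w‖) := by
  have hball : {w : ℂ | ‖w‖ < 1} = Metric.ball (0:ℂ) 1 := disk_ball_eq
  -- Step 1: strict maximum principle: ‖φ w‖ < 1 on the disk
  have hstrict : ∀ w ∈ {w : ℂ | ‖w‖ < 1}, ‖φ w‖ < 1 := by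
    intro w hw
    rcases lt_or_eq_of_le (hmap w hw) with h | h
    · exact h
    · exfalso
      have hmax : IsMaxOn (norm ∘ φ) {w : ℂ | ‖w‖ < 1} w := by
        intro x hx
        simp only [Function.comp]
        calc ‖φ x‖ ≤ 1 := hmap x hx
        _ = ‖φ w‖ := h.symm
      have hopen : IsOpen {w : ℂ | ‖w‖ < 1} := by
        rw [hball]; exact Metric.isOpen_ball
      have hpre : IsPreconnected {w : ℂ | ‖w‖ < 1} := by
        rw [hball]; exact (convex_ball (0:ℂ) 1).isPreconnected
      have := Complex.eqOn_of_isPreconnected_of_isMaxOn_norm hpre hopen hφ hw hmax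
      have h00 : (0:ℂ) ∈ {w : ℂ | ‖w‖ < 1} := by simp
      have := this h00
      simp only [Function.const] at this
      rw [this] at h0
      rw [← h] at h0
      exact lt_irrefl _ h0
  set a := φ 0 with ha
  have hA0 : 0 ≤ ‖a‖ := norm_nonneg _
  have hA1 : ‖a‖ < 1 := h0
  -- the Möbius composition
  set ψ : ℂ → ℂ := fun w => (φ w - a) / (1 - (starRingEnd ℂ) a * φ w) with hψ
  have hden : ∀ w ∈ {w : ℂ | ‖w‖ < 1}, (1 - (starRingEnd ℂ) a * φ w) ≠ 0 := by
    intro w hw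
    have : ‖(starRingEnd ℂ) a * φ w‖ < 1 := by
      rw [norm_mul, RingHomIsometric.norm_map]
      calc ‖a‖ * ‖φ w‖ ≤ 1 * ‖φ w‖ := by
            apply mul_le_mul_of_nonneg_right hA1.le (norm_nonneg _)
      _ = ‖φ w‖ := one_mul _
      _ < 1 := hstrict w hw
    intro hc
    have heq : (starRingEnd ℂ) a * φ w = 1 := by linear_combination -hc
    rw [heq, norm_one] at this
    exact lt_irrefl _ this
  have h0mem : (0:ℂ) ∈ {w : ℂ | ‖w‖ < 1} := by simp
  have hψ0 : ψ 0 = 0 := by simp [hψ, ← ha]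
  -- norms of numerator and denominator
  -- key bound: ‖ψ w‖ < 1 on the disk
  have hpsi_lt : ∀ w ∈ {w : ℂ | ‖w‖ < 1}, ‖ψ w‖ < 1 := by
    intro w hw
    have hid := norm_sq_identity a (φ w)
    have hB := hstrict w hw
    have hB0 : 0 ≤ ‖φ w‖ := norm_nonneg _
    have hDpos : 0 < ‖1 - (starRingEnd ℂ) a * φ w‖ := norm_pos_iff.mpr (hden w hw)
    have hN0 : 0 ≤ ‖φ w - a‖ := norm_nonneg _
    have hNltD : ‖φ w - a‖ < ‖1 - (starRingEnd ℂ) a * φ w‖ := by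
      have hsq : ‖φ w - a‖ ^ 2 < ‖1 - (starRingEnd ℂ) a * φ w‖ ^ 2 := by
        nlinarith [hid, mul_pos (show (0:ℝ) < 1 - ‖a‖ ^ 2 by nlinarith)
          (show (0:ℝ) < 1 - ‖φ w‖ ^ 2 by nlinarith)]
      exact lt_of_pow_lt_pow_left₀ 2 (norm_nonneg _) hsq
    rw [hψ]
    simp only
    rw [norm_div]
    rw [div_lt_one hDpos]
    exact hNltD
  have hdiff : DifferentiableOn ℂ ψ {w : ℂ | ‖w‖ < 1} := by
    apply DifferentiableOn.div
    · exact hφ.sub (differentiableOn_const a)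
    · exact (differentiableOn_const _).sub ((differentiableOn_const _).mul hφ)
    · exact hden
  -- Schwarz lemma
  have hmaps : Set.MapsTo ψ (Metric.ball (0:ℂ) 1) (Metric.ball (ψ 0) 1) := by
    intro x hx
    rw [hψ0, Metric.mem_ball, dist_zero_right]
    exact hpsi_lt x (by rwa [hball])
  have hschwarz : ∀ w ∈ {w : ℂ | ‖w‖ < 1}, ‖ψ w‖ ≤ ‖w‖ := by
    intro w hw
    have := Complex.dist_le_div_mul_dist_of_mapsTo_ball
      (by rw [← hball]; exact hdiff) (hmaps.mono_right ball_subset_closedBall) (by rwa [← hball])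
    rw [hψ0, dist_zero_right, dist_zero_right] at this
    simpa using this
  -- final arithmetic
  intro w hw
  have hSch := hschwarz w hw
  have hid := norm_sq_identity a (φ w)
  have hB := hstrict w hw
  have hB0 : 0 ≤ ‖φ w‖ := norm_nonneg _
  have hDpos : 0 < ‖1 - (starRingEnd ℂ) a * φ w‖ := norm_pos_iff.mpr (hden w hw)
  have hN0 : 0 ≤ ‖φ w - a‖ := norm_nonneg _
  set A := ‖a‖
  set B := ‖φ w‖
  set D := ‖1 - (starRingEnd ℂ) a * (φ w)‖
  set N := ‖φ w - a‖
  have hw1 : ‖w‖ < 1 := hw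
  have hw0 : 0 ≤ ‖w‖ := norm_nonneg _
  have hpsiN : ‖ψ w‖ = N / D := by
    rw [hψ]; simp only; rw [norm_div]
  rw [hpsiN] at hSch
  have hND : N ≤ ‖w‖ * D := (div_le_iff₀ hDpos).mp hSch
  -- D ≥ 1 - A
  have hDlow : 1 - A ≤ D := by
    have h1 : ‖(1 : ℂ)‖ - ‖(starRingEnd ℂ) a * φ w‖ ≤ D := norm_sub_norm_le _ _
    rw [norm_one, norm_mul, RingHomIsometric.norm_map] at h1
    nlinarith
  rw [div_mul_eq_mul_div, le_div_iff₀ (by linarith : (0:ℝ) < 1 - A)]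
  -- goal : (1 - ‖w‖) * (1 - A) ≤ 2 * (1 + A) * (1 - B)
  have hDN : 0 ≤ D - N := by nlinarith
  have hkey : D - N ≤ 2 * (1 + A) * (1 - B) := by
    nlinarith [hid, mul_nonneg hDN (by linarith : (0:ℝ) ≤ D + N - (1 - A)),
      mul_nonneg (mul_nonneg (by linarith : (0:ℝ) ≤ 1 - A) (by linarith : (0:ℝ) ≤ 1 + A))
        (sq_nonneg (1 - B)),
      (by linarith : (0:ℝ) < 1 - A)]
  nlinarith [hkey, hND, mul_nonneg (by linarith : (0:ℝ) ≤ 1 - ‖w‖)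
    (by linarith : (0:ℝ) ≤ D - (1 - A))]
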